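/- Let ι be an index type, λ : ι → ℝ with λ i > 0 for all i, and let p > 0 be such that the family (λ i)^{−p} is summable. Then for every z ∈ ℂ with Re z > p: the function t ↦ t^{z−1} · ∑_i e^{−(λ i) t} is absolutely integrable on (0,∞) (the sum ∑_i e^{−(λ i) t} converging for every t > 0), and ∫₀^∞ t^{z−1} (∑_i e^{−(λ i) t}) dt = Γ(z) · ∑_i (λ i : ℂ)^{−z}. -/

import Mathlib

open MeasureTheory
open scoped ENNReal NNReal

lemma aux_exp_neg_le (p : ℝ) (hp : 0 < p) :
    ∀ x : ℝ, 0 < x → Real.exp (-x) ≤ (Nat.ceil p).factorial * x ^ (-p) := by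
  intro x hx
  set n := Nat.ceil p with hn
  have hfact : (1 : ℝ) ≤ n.factorial := by exact_mod_cast Nat.one_le_iff_ne_zero.mpr (Nat.factorial_ne_zero n)
  rcases le_or_gt 1 x with h1 | h1
  · have hxn : x ^ (n : ℝ) / n.factorial ≤ Real.exp x := by
      have h := Real.sum_le_exp_of_nonneg hx.le (n + 1)
      refine le_trans ?_ h
      have h2 := Finset.single_le_sum (f := fun i => x ^ i / i.factorial)
        (fun i _ => by positivity) (Finset.self_mem_range_succ n)
      calc x ^ (n : ℝ) / n.factorial = x ^ n / n.factorial := by rw [Real.rpow_natCast]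
        _ ≤ _ := h2
    have hx1 : x ^ (-(n : ℝ)) ≤ x ^ (-p) :=
      Real.rpow_le_rpow_of_exponent_le h1 (neg_le_neg (Nat.le_ceil p))
    have hd : (0 : ℝ) < x ^ (n : ℝ) / n.factorial := by positivity
    have key : Real.exp (-x) ≤ n.factorial * x ^ (-(n : ℝ)) := by
      rw [Real.exp_neg, Real.rpow_neg hx.le]
      calc (Real.exp x)⁻¹ ≤ (x ^ (n : ℝ) / n.factorial)⁻¹ := by
            exact inv_anti₀ hd hxn
        _ = n.factorial * (x ^ (n : ℝ))⁻¹ := by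
            rw [div_eq_mul_inv, mul_inv, inv_inv]; ring
    calc Real.exp (-x) ≤ n.factorial * x ^ (-(n : ℝ)) := key
      _ ≤ n.factorial * x ^ (-p) := by
          exact mul_le_mul_of_nonneg_left hx1 (by positivity)
  · have h1' : Real.exp (-x) ≤ 1 := Real.exp_le_one_iff.mpr (by linarith)
    have h2 : (1 : ℝ) ≤ x ^ (-p) :=
      Real.one_le_rpow_of_pos_of_le_one_of_nonpos hx h1.le (neg_nonpos.mpr hp.le)
    calc Real.exp (-x) ≤ 1 := h1'
      _ ≤ n.factorial * x ^ (-p) := by nlinarith [Real.rpow_nonneg hx.le (-p)]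

lemma aux_summable_rpow {ι : Type*} (lam : ι → ℝ) (hpos : ∀ i, 0 < lam i) {p q : ℝ}
    (hp : 0 < p) (hpq : p ≤ q) (hsum : Summable fun i => (lam i) ^ (-p)) :
    Summable fun i => (lam i) ^ (-q) := by
  refine hsum.of_norm_bounded_eventually ?_
  have h := hsum.tendsto_cofinite_zero
  have h1 : ∀ᶠ i in Filter.cofinite, lam i ^ (-p) < 1 :=
    h.eventually_lt_const (by norm_num)
  filter_upwards [h1] with i hi
  have hge : (1 : ℝ) ≤ lam i := by
    by_contra hlt
    push_neg at hlt
    have : 1 < lam i ^ (-p) :=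
      (Real.one_lt_rpow_iff_of_pos (hpos i)).mpr (Or.inr ⟨hlt, neg_lt_zero.mpr hp⟩)
    linarith
  rw [Real.norm_eq_abs, abs_of_nonneg (Real.rpow_nonneg (hpos i).le _)]
  exact Real.rpow_le_rpow_of_exponent_le hge (neg_le_neg hpq)

theorem stmt_7 {ι : Type*} (lam : ι → ℝ) (hpos : ∀ i, 0 < lam i)
    (p : ℝ) (hp : 0 < p) (hsum : Summable fun i => (lam i) ^ (-p)) :
    ∀ z : ℂ, p < z.re →
      (∀ t : ℝ, 0 < t → Summable fun i => Real.exp (-(lam i) * t)) ∧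
      IntegrableOn
        (fun t : ℝ => (t : ℂ) ^ (z - 1) * ((∑' i, Real.exp (-(lam i) * t) : ℝ) : ℂ))
        (Set.Ioi 0) ∧
      ∫ t in Set.Ioi (0 : ℝ),
          (t : ℂ) ^ (z - 1) * ((∑' i, Real.exp (-(lam i) * t) : ℝ) : ℂ)
        = Complex.Gamma z * ∑' i, ((lam i : ℂ)) ^ (-z) := by
  intro z hz
  have hz0 : 0 < z.re := lt_trans hp hz
  have hcnt : Countable ι := by
    have h1 : Function.support (fun i => lam i ^ (-p)) = Set.univ := by
      ext i
      simp only [Function.mem_support, Set.mem_univ, iff_true]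
      exact (Real.rpow_pos_of_pos (hpos i) _).ne'
    have h2 := hsum.countable_support
    rw [h1] at h2
    exact Set.countable_univ_iff.mp h2
  have hsummq : Summable fun i => lam i ^ (-z.re) :=
    aux_summable_rpow lam hpos hp (le_of_lt hz) hsum
  -- Part 1 : summability of the heat trace
  have hterm : ∀ t : ℝ, 0 < t → Summable fun i => Real.exp (-(lam i) * t) := by
    intro t ht
    refine Summable.of_nonneg_of_le (fun i => (Real.exp_pos _).le) (fun i => ?_)
      (hsum.mul_left ((Nat.ceil p).factorial * t ^ (-p)))
    have hb := aux_exp_neg_le p hp (lam i * t) (mul_pos (hpos i) ht)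
    calc Real.exp (-(lam i) * t) = Real.exp (-(lam i * t)) := by rw [neg_mul]
      _ ≤ (Nat.ceil p).factorial * (lam i * t) ^ (-p) := hb
      _ = (Nat.ceil p).factorial * t ^ (-p) * lam i ^ (-p) := by
          rw [Real.mul_rpow (hpos i).le ht.le]; ring
  -- The summands
  set F : ι → ℝ → ℂ := fun i t => (t : ℂ) ^ (z - 1) * (Real.exp (-(lam i) * t) : ℂ) with hF
  -- Integrability of each summand
  have hFint : ∀ i, IntegrableOn (F i) (Set.Ioi 0) := by
    intro i
    have h0 := Complex.GammaIntegral_convergent hz0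
    have h1 : IntegrableOn
        (fun t : ℝ => (Real.exp (-(lam i * t)) : ℂ) * ((lam i * t : ℝ) : ℂ) ^ (z - 1))
        (Set.Ioi 0) := by
      have h2 := (integrableOn_Ioi_comp_mul_left_iff
        (fun x : ℝ => (Real.exp (-x) : ℂ) * ((x : ℝ) : ℂ) ^ (z - 1)) 0 (hpos i)).mpr
      simpa [mul_zero] using h2 (by simpa using h0)
    have h3 : IntegrableOn
        (fun t : ℝ => (((lam i : ℂ)) ^ (z - 1))⁻¹ *
          ((Real.exp (-(lam i * t)) : ℂ) * ((lam i * t : ℝ) : ℂ) ^ (z - 1)))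
        (Set.Ioi 0) := h1.const_mul (((lam i : ℂ)) ^ (z - 1))⁻¹
    refine IntegrableOn.congr_fun h3 (fun t ht => ?_) measurableSet_Ioi
    have hne : ((lam i : ℂ)) ^ (z - 1) ≠ 0 := by
      intro h
      rw [Complex.cpow_eq_zero_iff] at h
      exact_mod_cast (hpos i).ne' (by exact_mod_cast h.1)
    have hmul : (((lam i * t : ℝ)) : ℂ) ^ (z - 1)
        = ((lam i : ℂ)) ^ (z - 1) * ((t : ℂ)) ^ (z - 1) := by
      rw [Complex.ofReal_mul]
      exact Complex.mul_cpow_ofReal_nonneg (hpos i).le (le_of_lt ht) _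
    simp only [hF, neg_mul]
    rw [hmul]
    push_cast
    field_simp
  -- Value of each summand integral
  have hFval : ∀ i, (∫ t in Set.Ioi (0 : ℝ), F i t)
      = Complex.Gamma z * ((lam i : ℂ)) ^ (-z) := by
    intro i
    have h := Complex.integral_cpow_mul_exp_neg_mul_Ioi hz0 (hpos i)
    have heq : (∫ t in Set.Ioi (0 : ℝ), F i t)
        = ∫ t in Set.Ioi (0 : ℝ), (t : ℂ) ^ (z - 1) * Complex.exp (-((lam i : ℂ) * t)) := by
      refine setIntegral_congr_fun measurableSet_Ioi (fun t ht => ?_)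
      rw [hF]
      simp only [← Complex.ofReal_exp]
      norm_cast
      rw [neg_mul]
    rw [heq, h, one_div,
      Complex.inv_cpow _ _ (by
        rw [Complex.arg_ofReal_of_nonneg (hpos i).le]
        exact Real.pi_ne_zero.symm),
      ← Complex.cpow_neg]
    ring
  -- Norm of each summand
  have hnormval : ∀ i, (∫ t in Set.Ioi (0 : ℝ), ‖F i t‖)
      = lam i ^ (-z.re) * Real.Gamma z.re := by
    intro i
    have heq : ∀ t ∈ Set.Ioi (0 : ℝ),
        ‖F i t‖ = t ^ (z.re - 1) * Real.exp (-(lam i * t)) := by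
      intro t ht
      rw [hF]
      simp only [norm_mul, Complex.norm_real, Real.norm_eq_abs,
        abs_of_nonneg (Real.exp_pos _).le]
      rw [Complex.norm_cpow_eq_rpow_re_of_pos ht, Complex.sub_re, Complex.one_re, neg_mul]
    rw [setIntegral_congr_fun measurableSet_Ioi heq,
      Real.integral_rpow_mul_exp_neg_mul_Ioi hz0 (hpos i), one_div,
      Real.inv_rpow (hpos i).le, ← Real.rpow_neg (hpos i).le]
  have hsumnorm : Summable fun i => lam i ^ (-z.re) * Real.Gamma z.re :=
    hsummq.mul_right _
  -- lintegral of nnnorms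
  have hlint : ∀ i, (∫⁻ t in Set.Ioi (0 : ℝ), ‖F i t‖₊)
      = ENNReal.ofReal (lam i ^ (-z.re) * Real.Gamma z.re) := by
    intro i
    have := ofReal_integral_norm_eq_lintegral_enorm (hFint i)
    rw [hnormval i] at this
    exact this.symm
  have hfin : (∑' i, ∫⁻ t in Set.Ioi (0 : ℝ), ‖F i t‖₊) ≠ ⊤ := by
    simp_rw [hlint]
    rw [← ENNReal.ofReal_tsum_of_nonneg (fun i =>
      mul_nonneg (Real.rpow_nonneg (hpos i).le _) (Real.Gamma_pos_of_pos hz0).le) hsumnorm]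
    exact ENNReal.ofReal_ne_top
  -- identification of the integrand with the sum of the summands on `Ioi 0`
  have hSeq : ∀ t ∈ Set.Ioi (0 : ℝ),
      (t : ℂ) ^ (z - 1) * ((∑' i, Real.exp (-(lam i) * t) : ℝ) : ℂ) = ∑' i, F i t := by
    intro t _
    rw [Complex.ofReal_tsum]
    exact (tsum_mul_left).symm
  -- measurability of the integrand
  have hmeasS : AEStronglyMeasurable
      (fun t : ℝ => (t : ℂ) ^ (z - 1) * ((∑' i, Real.exp (-(lam i) * t) : ℝ) : ℂ))
      (volume.restrict (Set.Ioi 0)) := by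
    have hcpow : AEStronglyMeasurable (fun t : ℝ => (t : ℂ) ^ (z - 1))
        (volume.restrict (Set.Ioi 0)) := by
      refine ContinuousOn.aestronglyMeasurable ?_ measurableSet_Ioi
      refine continuousOn_of_forall_continuousAt fun x hx => ?_
      exact (continuousAt_cpow_const (Complex.ofReal_mem_slitPlane.2 hx)).comp
        Complex.continuous_ofReal.continuousAt
    have hG : Measurable fun t : ℝ => (∑' i, Real.exp (-(lam i) * t)) := by
      have heq : (fun t : ℝ => (∑' i, Real.exp (-(lam i) * t)))
          = fun t => ((∑' i, Real.toNNReal (Real.exp (-(lam i) * t)) : NNReal) : ℝ) := by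
        funext t
        rw [NNReal.coe_tsum]
        congr 1
        funext i
        rw [Real.coe_toNNReal _ (Real.exp_pos _).le]
      rw [heq]
      refine Measurable.coe_nnreal_real ?_
      refine Measurable.nnreal_tsum fun i => ?_
      exact ((measurable_id.const_mul (-(lam i))).exp).real_toNNReal
    exact hcpow.mul ((Complex.measurable_ofReal.comp hG).aestronglyMeasurable)
  -- finiteness of the integral of the norm
  have hfi : HasFiniteIntegral
      (fun t : ℝ => (t : ℂ) ^ (z - 1) * ((∑' i, Real.exp (-(lam i) * t) : ℝ) : ℂ))
      (volume.restrict (Set.Ioi 0)) := by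
    have hb : ∀ᵐ (t : ℝ) ∂(volume.restrict (Set.Ioi (0 : ℝ))),
        (‖(t : ℂ) ^ (z - 1) * ((∑' i, Real.exp (-(lam i) * t) : ℝ) : ℂ)‖₊ : ℝ≥0∞)
          ≤ ∑' i, (‖F i t‖₊ : ℝ≥0∞) := by
      filter_upwards [ae_restrict_mem measurableSet_Ioi] with t ht
      rw [hSeq t ht]
      have hs1 : Summable fun i => ‖F i t‖ := by
        refine ((hterm t ht).mul_left ‖(t : ℂ) ^ (z - 1)‖).congr fun i => ?_
        simp only [hF, norm_mul, Complex.norm_real, Real.norm_eq_abs,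
          abs_of_nonneg (Real.exp_pos _).le]
      have hs2 : Summable fun i => ‖F i t‖₊ := by
        rw [← NNReal.summable_coe]
        simpa [coe_nnnorm] using hs1
      calc (‖∑' i, F i t‖₊ : ℝ≥0∞) ≤ ((∑' i, ‖F i t‖₊ : NNReal) : ℝ≥0∞) :=
            ENNReal.coe_le_coe.2 (nnnorm_tsum_le hs2)
        _ = ∑' i, (‖F i t‖₊ : ℝ≥0∞) := ENNReal.coe_tsum hs2
    show (∫⁻ t in Set.Ioi (0 : ℝ),
        ‖(t : ℂ) ^ (z - 1) * ((∑' i, Real.exp (-(lam i) * t) : ℝ) : ℂ)‖₊) < ⊤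
    calc (∫⁻ t in Set.Ioi (0 : ℝ),
          ‖(t : ℂ) ^ (z - 1) * ((∑' i, Real.exp (-(lam i) * t) : ℝ) : ℂ)‖₊)
        ≤ ∫⁻ t in Set.Ioi (0 : ℝ), ∑' i, (‖F i t‖₊ : ℝ≥0∞) := lintegral_mono_ae hb
      _ = ∑' i, ∫⁻ t in Set.Ioi (0 : ℝ), ‖F i t‖₊ :=
          lintegral_tsum fun i => ((hFint i).aestronglyMeasurable.enorm)
      _ < ⊤ := hfin.lt_top
  refine ⟨hterm, ⟨hmeasS, hfi⟩, ?_⟩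
  rw [setIntegral_congr_fun measurableSet_Ioi hSeq,
    integral_tsum (fun i => (hFint i).aestronglyMeasurable) hfin]
  simp_rw [hFval]
  exact tsum_mul_left
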